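/- arXiv:hep-th/0405216 — 2 statements merged into one kernel-verified Lean document; each statement's English description precedes it below -/
import Mathlib

section
/- Let w1 = λ/(1-λ²) and w2 = (1+λ²)/(2(1-λ²)) with λ = e^{-2t} for t > 0. Then for the Mehler kernel K(x,y) = (w1/π)^{N/2} exp[2 w1 (x·y) - w2(|x|² + |y|²)] on ℝ^N × ℝ^N, one has ∫∫ |K(x,y)|² dx dy = w1^N; in particular K is square integrable. -/
open MeasureTheory Real
open scoped RealInnerProductSpace

variable {V : Type*} [NormedAddCommGroup V] [InnerProductSpace ℝ V] [FiniteDimensional ℝ V]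
  [MeasurableSpace V] [BorelSpace V]

lemma gauss_real {b : ℝ} (hb : 0 < b) (c : ℝ) (w : V) :
    ∫ v : V, Real.exp (-b * ‖v‖ ^ 2 + c * ⟪w, v⟫) =
      (π / b) ^ ((Module.finrank ℝ V : ℝ) / 2) * Real.exp (c ^ 2 * ‖w‖ ^ 2 / (4 * b)) := by
  have hb' : 0 < (b : ℂ).re := by simpa using hb
  have h := GaussianFourier.integral_cexp_neg_mul_sq_norm_add (V := V) hb' (c : ℂ) w
  have hl : (∫ v : V, Complex.exp (-(b:ℂ) * ‖v‖ ^ 2 + (c:ℂ) * ⟪w, v⟫)) =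
      ((∫ v : V, Real.exp (-b * ‖v‖ ^ 2 + c * ⟪w, v⟫) : ℝ) : ℂ) := by
    rw [show (∫ v : V, Complex.exp (-(b:ℂ) * ‖v‖ ^ 2 + (c:ℂ) * ⟪w, v⟫)) =
        ∫ v : V, ((Real.exp (-b * ‖v‖ ^ 2 + c * ⟪w, v⟫) : ℝ) : ℂ) from by
      congr 1 with v
      rw [Complex.ofReal_exp]
      congr 1
      push_cast
      ring]
    exact integral_ofReal
  rw [hl] at h
  have hr : ((π : ℂ) / b) ^ ((Module.finrank ℝ V : ℂ) / 2) *
        Complex.exp ((c:ℂ) ^ 2 * ‖w‖ ^ 2 / (4 * b)) =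
      (((π / b) ^ ((Module.finrank ℝ V : ℝ) / 2) *
        Real.exp (c ^ 2 * ‖w‖ ^ 2 / (4 * b)) : ℝ) : ℂ) := by
    rw [Complex.ofReal_mul, Complex.ofReal_exp,
      Complex.ofReal_cpow (by positivity : (0:ℝ) ≤ π / b)]
    push_cast
    ring_nf
  rw [hr] at h
  exact_mod_cast h

lemma gauss_real_integrable {b : ℝ} (hb : 0 < b) (c : ℝ) (w : V) :
    Integrable (fun v : V => Real.exp (-b * ‖v‖ ^ 2 + c * ⟪w, v⟫)) := by
  have hb' : 0 < (b : ℂ).re := by simpa using hb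
  have h := (GaussianFourier.integrable_cexp_neg_mul_sq_norm_add (V := V) hb' (c : ℂ) w).norm
  refine h.congr (Filter.Eventually.of_forall fun v => ?_)
  have hz : (-(b:ℂ) * ‖v‖ ^ 2 + (c:ℂ) * ⟪w, v⟫ : ℂ) =
      ((-b * ‖v‖ ^ 2 + c * ⟪w, v⟫ : ℝ) : ℂ) := by push_cast; ring
  simp only [Complex.norm_exp, hz, Complex.ofReal_re]

lemma gauss_real_integrable' {b : ℝ} (hb : 0 < b) :
    Integrable (fun v : V => Real.exp (-b * ‖v‖ ^ 2)) := by
  refine (gauss_real_integrable hb 0 (0 : V)).congr (Filter.Eventually.of_forall fun v => ?_)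
  simp

/-- L² norm of the Mehler kernel equals `w1^N`; in particular the
kernel is square integrable on `ℝ^N × ℝ^N`. -/
theorem mehler_kernel_sq_integral (N : ℕ) (hN : 1 ≤ N) (t : ℝ) (ht : 0 < t)
    (lam w1 w2 : ℝ)
    (hlam : lam = Real.exp (-2 * t))
    (hw1 : w1 = lam / (1 - lam ^ 2))
    (hw2 : w2 = (1 + lam ^ 2) / (2 * (1 - lam ^ 2)))
    (K : EuclideanSpace ℝ (Fin N) → EuclideanSpace ℝ (Fin N) → ℝ)
    (hK : ∀ x y, K x y = (w1 / Real.pi) ^ ((N : ℝ) / 2) *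
      Real.exp (2 * w1 * (inner ℝ x y : ℝ) - w2 * (‖x‖ ^ 2 + ‖y‖ ^ 2))) :
    (∫ x : EuclideanSpace ℝ (Fin N), ∫ y : EuclideanSpace ℝ (Fin N), |K x y| ^ 2)
      = w1 ^ N ∧
    Integrable (fun p : EuclideanSpace ℝ (Fin N) × EuclideanSpace ℝ (Fin N) =>
      |K p.1 p.2| ^ 2) := by
  have hlam0 : 0 < lam := hlam ▸ Real.exp_pos _
  have hlam1 : lam < 1 := by
    rw [hlam, Real.exp_lt_one_iff]
    nlinarith
  have hden : 0 < 1 - lam ^ 2 := by nlinarith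
  have hw1p : 0 < w1 := by rw [hw1]; positivity
  have hw2p : 0 < w2 := by rw [hw2]; positivity
  have hw2ne : w2 ≠ 0 := ne_of_gt hw2p
  have hkey : w2 ^ 2 - w1 ^ 2 = 1 / 4 := by
    rw [hw1, hw2]
    field_simp
    ring
  have hw12 : w1 < w2 := by nlinarith
  set c0 : ℝ := (w1 / π) ^ ((N : ℝ) / 2) with hc0
  have hc0nn : 0 ≤ c0 := by positivity
  have hrank : (Module.finrank ℝ (EuclideanSpace ℝ (Fin N)) : ℝ) = (N : ℝ) := by
    simp [finrank_euclideanSpace_fin]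
  -- expand the squared kernel
  have expand : ∀ x y : EuclideanSpace ℝ (Fin N), |K x y| ^ 2 =
      (c0 ^ 2 * Real.exp (-(2 * w2) * ‖x‖ ^ 2)) *
        Real.exp (-(2 * w2) * ‖y‖ ^ 2 + (4 * w1) * ⟪x, y⟫) := by
    intro x y
    rw [sq_abs, hK x y, mul_pow, pow_two (Real.exp _), ← Real.exp_add,
      mul_assoc (c0 ^ 2) (Real.exp _) (Real.exp _), ← Real.exp_add]
    congr 2
    ring
  have hcoeff : ∀ s : ℝ, -(2 * w2) * s + (4 * w1) ^ 2 * s / (4 * (2 * w2)) =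
      -(1 / (2 * w2)) * s := by
    intro s
    field_simp
    linear_combination (-4 * s) * hkey
  -- inner integral
  have hinner : ∀ x : EuclideanSpace ℝ (Fin N), (∫ y : EuclideanSpace ℝ (Fin N), |K x y| ^ 2) =
      (c0 ^ 2 * (π / (2 * w2)) ^ ((N : ℝ) / 2)) * Real.exp (-(1 / (2 * w2)) * ‖x‖ ^ 2) := by
    intro x
    simp only [expand]
    rw [MeasureTheory.integral_const_mul,
      gauss_real (by positivity : (0 : ℝ) < 2 * w2) (4 * w1) x, hrank]
    have hm : ∀ a b : ℝ, (c0 ^ 2 * Real.exp a) *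
        ((π / (2 * w2)) ^ ((N : ℝ) / 2) * Real.exp b) =
        (c0 ^ 2 * (π / (2 * w2)) ^ ((N : ℝ) / 2)) * Real.exp (a + b) := by
      intro a b
      rw [Real.exp_add]
      ring
    rw [hm, ← hcoeff (‖x‖ ^ 2)]
  -- outer integral
  have hbout : (0 : ℝ) < 1 / (2 * w2) := by positivity
  have houter : (∫ x : EuclideanSpace ℝ (Fin N), Real.exp (-(1 / (2 * w2)) * ‖x‖ ^ 2)) =
      (π * (2 * w2)) ^ ((N : ℝ) / 2) := by
    rw [GaussianFourier.integral_rexp_neg_mul_sq_norm hbout, hrank]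
    congr 1
    field_simp
  have hval : (c0 ^ 2 * (π / (2 * w2)) ^ ((N : ℝ) / 2)) * (π * (2 * w2)) ^ ((N : ℝ) / 2)
      = w1 ^ N := by
    have h1 : (π / (2 * w2)) ^ ((N : ℝ) / 2) * (π * (2 * w2)) ^ ((N : ℝ) / 2)
        = (π ^ 2) ^ ((N : ℝ) / 2) := by
      rw [← Real.mul_rpow (by positivity) (by positivity)]
      congr 1
      field_simp
    have h2 : (π ^ 2) ^ ((N : ℝ) / 2) = π ^ N := by
      rw [← Real.rpow_natCast π 2, ← Real.rpow_mul pi_pos.le,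
        show ((2 : ℕ) : ℝ) * ((N : ℝ) / 2) = (N : ℝ) by push_cast; ring, Real.rpow_natCast]
    have h3 : c0 ^ 2 = (w1 / π) ^ N := by
      rw [hc0, ← Real.rpow_natCast ((w1 / π) ^ ((N : ℝ) / 2)) 2,
        ← Real.rpow_mul (by positivity),
        show ((N : ℝ) / 2) * (2 : ℕ) = (N : ℝ) by push_cast; ring, Real.rpow_natCast]
    rw [mul_assoc, h1, h2, h3, div_pow, div_mul_cancel₀]
    positivity
  constructor
  · simp only [hinner]
    rw [MeasureTheory.integral_const_mul, houter, hval]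
  · -- integrability
    have hd2 : (0 : ℝ) < 2 * w2 - 2 * w1 := by linarith
    have hgi : Integrable (fun p : EuclideanSpace ℝ (Fin N) × EuclideanSpace ℝ (Fin N) =>
        (c0 ^ 2 * Real.exp (-(2 * w2 - 2 * w1) * ‖p.1‖ ^ 2)) *
          Real.exp (-(2 * w2 - 2 * w1) * ‖p.2‖ ^ 2)) := by
      rw [MeasureTheory.Measure.volume_eq_prod]
      exact ((gauss_real_integrable' hd2).const_mul (c0 ^ 2)).mul_prod
        (gauss_real_integrable' hd2)
    refine hgi.mono' ?_ (Filter.Eventually.of_forall fun p => ?_)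
    · have hcont : Continuous fun p : EuclideanSpace ℝ (Fin N) × EuclideanSpace ℝ (Fin N) =>
          (c0 ^ 2 * Real.exp (-(2 * w2) * ‖p.1‖ ^ 2)) *
            Real.exp (-(2 * w2) * ‖p.2‖ ^ 2 + (4 * w1) * ⟪p.1, p.2⟫) := by
        have h1 : Continuous fun p : EuclideanSpace ℝ (Fin N) × EuclideanSpace ℝ (Fin N) =>
            -(2 * w2) * ‖p.1‖ ^ 2 := by fun_prop
        have h2 : Continuous fun p : EuclideanSpace ℝ (Fin N) × EuclideanSpace ℝ (Fin N) =>
            -(2 * w2) * ‖p.2‖ ^ 2 := by fun_prop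
        have h3 : Continuous fun p : EuclideanSpace ℝ (Fin N) × EuclideanSpace ℝ (Fin N) =>
            (⟪p.1, p.2⟫ : ℝ) := continuous_inner
        exact (continuous_const.mul (Real.continuous_exp.comp h1)).mul
          (Real.continuous_exp.comp (h2.add (continuous_const.mul h3)))
      have heq : (fun p : EuclideanSpace ℝ (Fin N) × EuclideanSpace ℝ (Fin N) =>
          |K p.1 p.2| ^ 2) = fun p =>
          (c0 ^ 2 * Real.exp (-(2 * w2) * ‖p.1‖ ^ 2)) *
            Real.exp (-(2 * w2) * ‖p.2‖ ^ 2 + (4 * w1) * ⟪p.1, p.2⟫) :=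
        funext fun p => expand p.1 p.2
      rw [heq]
      exact hcont.aestronglyMeasurable
    · rw [Real.norm_eq_abs, abs_of_nonneg (by positivity), expand p.1 p.2]
      have h1 : ⟪p.1, p.2⟫ ≤ ‖p.1‖ * ‖p.2‖ := real_inner_le_norm p.1 p.2
      have hm2 : ∀ a b : ℝ, (c0 ^ 2 * Real.exp a) * Real.exp b =
          c0 ^ 2 * Real.exp (a + b) := by
        intro a b
        rw [Real.exp_add, mul_assoc]
      rw [hm2, hm2]
      gcongr c0 ^ 2 * Real.exp ?_
      nlinarith [mul_le_mul_of_nonneg_left h1 (by positivity : (0:ℝ) ≤ 4 * w1),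
        mul_nonneg hw1p.le (sq_nonneg (‖p.1‖ - ‖p.2‖))]
end

section
/- Let H_B ≥ 0 be self-adjoint and V a symmetric operator such that ‖e^{-H_B t/2} V e^{-H_B t/2}‖ ≤ b t^{-1+ε} for all t > 0 with b > 0, 0 < ε < 1, and suppose H = H_B + V satisfies H ≥ cI for some c > 0. Define F(t) = e^{-H_B t/2}(I - tV)e^{-H_B t/2}. Then there exists t₀ > 0 such that for all t ∈ (0, t₀) and all unit vectors φ, 0 < ⟨φ, F(t)φ⟩ < 1; consequently ‖F(t)‖ < 1 for such t. -/
open NormedSpace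

section Aux

variable {H : Type*} [NormedAddCommGroup H] [InnerProductSpace ℂ H] [CompleteSpace H]

set_option linter.unusedSectionVars false

lemma expR_hasDerivAt (C : H →L[ℂ] H) (s : ℝ) :
    HasDerivAt (fun r : ℝ => exp ((r : ℂ) • C)) (C * exp ((s : ℂ) • C)) s := by
  have h := hasDerivAt_exp_smul_const' (𝕂 := ℂ) C (s : ℂ)
  have h2 := h.scomp s Complex.ofRealCLM.hasDerivAt
  simpa [Function.comp_def] using h2

lemma expR_sa {C : H →L[ℂ] H} (hC : IsSelfAdjoint C) (s : ℝ) :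
    IsSelfAdjoint (exp ((s : ℂ) • C)) := by
  rw [IsSelfAdjoint, star_exp, star_smul, hC.star_eq]
  norm_num

lemma expR_add (C : H →L[ℂ] H) (a b : ℝ) :
    exp ((a : ℂ) • C) * exp ((b : ℂ) • C) = exp (((a + b : ℝ) : ℂ) • C) := by
  letI : NormedAlgebra ℚ (H →L[ℂ] H) := NormedAlgebra.restrictScalars ℚ ℂ _
  rw [← exp_add_of_commute (((Commute.refl C).smul_left (a : ℂ)).smul_right (b : ℂ))]
  push_cast
  rw [add_smul]

lemma expR_comm (C : H →L[ℂ] H) (s : ℝ) : Commute C (exp ((s : ℂ) • C)) :=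
  ((Commute.refl C).smul_right (s : ℂ)).exp_right

lemma sa_move' {A : H →L[ℂ] H} (hA : IsSelfAdjoint A) (x y : H) :
    (inner ℂ x (A y) : ℂ) = inner ℂ (A x) y := by
  conv_lhs => rw [← hA.adjoint_eq]
  exact ContinuousLinearMap.adjoint_inner_right A x y

lemma re_inner_symm (x y : H) : (inner ℂ x y : ℂ).re = (inner ℂ y x : ℂ).re := by
  rw [← inner_conj_symm]
  exact Complex.conj_re _

lemma sq_form_nonneg' {C : H →L[ℂ] H} (hC : IsSelfAdjoint C) (s : ℝ) (φ : H) :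
    0 ≤ (inner ℂ φ ((C * C * exp ((s : ℂ) • C)) φ) : ℂ).re := by
  set D := C * exp (((s / 2 : ℝ) : ℂ) • C) with hD
  have hDsa : IsSelfAdjoint D := by
    rw [IsSelfAdjoint, star_mul, (expR_sa hC (s / 2)).star_eq, hC.star_eq,
      ← (expR_comm C (s / 2)).eq]
  have hDD : D * D = C * C * exp ((s : ℂ) • C) := by
    have h1 : exp (((s / 2 : ℝ) : ℂ) • C) * C = C * exp (((s / 2 : ℝ) : ℂ) • C) :=
      (expR_comm C (s / 2)).symm.eq
    calc D * D = C * (exp (((s / 2 : ℝ) : ℂ) • C) * C) * exp (((s / 2 : ℝ) : ℂ) • C) := by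
          rw [hD]; simp only [mul_assoc]
      _ = C * C * (exp (((s / 2 : ℝ) : ℂ) • C) * exp (((s / 2 : ℝ) : ℂ) • C)) := by
          rw [h1]; simp only [mul_assoc]
      _ = C * C * exp ((s : ℂ) • C) := by rw [expR_add]; norm_num
  rw [← hDD, ContinuousLinearMap.mul_apply, sa_move' hDsa]
  simpa using inner_self_nonneg (𝕜 := ℂ) (x := D φ)

noncomputable def Pform (φ : H) : (H →L[ℂ] H) →L[ℝ] ℝ :=
  Complex.reCLM.comp (((innerSL ℂ φ).comp ((ContinuousLinearMap.apply ℂ H) φ)).restrictScalars ℝ)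

lemma Pform_apply (φ : H) (T : H →L[ℂ] H) : Pform φ T = (inner ℂ φ (T φ) : ℂ).re := rfl

lemma G_hasDerivAt (C : H →L[ℂ] H) (φ : H) (s : ℝ) :
    HasDerivAt (fun r : ℝ => Pform φ ((1 + r • C) * exp (((-r : ℝ) : ℂ) • C)))
      (-(s * Pform φ (C * C * exp (((-s : ℝ) : ℂ) • C)))) s := by
  have d1 : HasDerivAt (fun r : ℝ => 1 + r • C) C s := by
    simpa using ((hasDerivAt_id s).smul_const C).const_add (1 : H →L[ℂ] H)
  have d2 : HasDerivAt (fun r : ℝ => exp (((-r : ℝ) : ℂ) • C))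
      (-(C * exp (((-s : ℝ) : ℂ) • C))) s := by
    have h := (expR_hasDerivAt C (-s)).scomp s (hasDerivAt_neg s)
    simpa [Function.comp_def] using h
  have dmul := d1.mul d2
  have hder : C * exp (((-s : ℝ) : ℂ) • C) + (1 + s • C) * -(C * exp (((-s : ℝ) : ℂ) • C))
      = -(s • (C * C * exp (((-s : ℝ) : ℂ) • C))) := by
    simp only [mul_neg, add_mul, one_mul, smul_mul_assoc, mul_assoc]
    abel
  rw [hder] at dmul
  have := (Pform φ).hasFDerivAt.comp_hasDerivAt s dmul
  simpa [Function.comp_def, Pi.mul_def] using this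

lemma formU {C : H →L[ℂ] H} (hC : IsSelfAdjoint C) (φ : H) :
    (inner ℂ φ ((exp (-C)) φ) : ℂ).re + (inner ℂ φ ((C * exp (-C)) φ) : ℂ).re ≤ ‖φ‖ ^ 2 := by
  set f : ℝ → ℝ := fun r : ℝ => Pform φ ((1 + r • C) * exp (((-r : ℝ) : ℂ) • C)) with hf
  set f' : ℝ → ℝ := fun r : ℝ => -(r * Pform φ (C * C * exp (((-r : ℝ) : ℂ) • C))) with hf'
  have hD : ∀ r : ℝ, HasDerivAt f (f' r) r := fun r => G_hasDerivAt C φ r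
  obtain ⟨ξ, hξ, heq⟩ := exists_hasDerivAt_eq_slope f f' one_pos
    (fun x _ => (hD x).continuousAt.continuousWithinAt) (fun x _ => hD x)
  have hf'ξ : f' ξ ≤ 0 := by
    have h1 := sq_form_nonneg' hC (-ξ) φ
    have h2 : (0 : ℝ) ≤ Pform φ (C * C * exp (((-ξ : ℝ) : ℂ) • C)) := by
      rw [Pform_apply]; exact_mod_cast h1
    have := mul_nonneg (le_of_lt hξ.1) h2
    simp only [hf']
    linarith
  have hslope : f 1 ≤ f 0 := by
    rw [heq] at hf'ξ
    have h10 : (1 : ℝ) - 0 = 1 := by norm_num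
    rw [h10, div_one] at hf'ξ
    linarith
  have hf0 : f 0 = ‖φ‖ ^ 2 := by
    simp only [hf, zero_smul, add_zero, Complex.ofReal_zero, neg_zero, zero_smul, exp_zero,
      mul_one, Pform_apply]
    simpa using inner_self_eq_norm_sq (𝕜 := ℂ) (x := φ)
  have hf1 : f 1 = (inner ℂ φ ((exp (-C)) φ) : ℂ).re
      + (inner ℂ φ ((C * exp (-C)) φ) : ℂ).re := by
    simp only [hf, Pform_apply, one_smul]
    have : ((1 : H →L[ℂ] H) + C) * exp (((-1 : ℝ) : ℂ) • C) = exp (-C) + C * exp (-C) := by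
      push_cast
      rw [neg_smul, one_smul, add_mul, one_mul]
    rw [this]
    simp [inner_add_right]
  rw [hf0] at hslope
  rw [hf1] at hslope
  exact hslope

lemma norm_exp_le_exp_norm (x : H →L[ℂ] H) : ‖exp x‖ ≤ Real.exp ‖x‖ := by
  rw [exp_eq_tsum (𝕂 := ℂ)]
  have hxpow : ∀ n : ℕ, ‖x ^ n‖ ≤ ‖x‖ ^ n := by
    intro n
    rcases Nat.eq_zero_or_pos n with h | h
    · subst h
      have h1 : ‖(1 : H →L[ℂ] H)‖ ≤ 1 := ContinuousLinearMap.norm_id_le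
      simpa using h1
    · exact norm_pow_le' x h
  calc ‖∑' (n : ℕ), ((Nat.factorial n : ℂ))⁻¹ • x ^ n‖
      ≤ ∑' (n : ℕ), ‖((Nat.factorial n : ℂ))⁻¹ • x ^ n‖ :=
        norm_tsum_le_tsum_norm (norm_expSeries_summable' (𝕂 := ℂ) x)
    _ ≤ ∑' (n : ℕ), ‖x‖ ^ n / Nat.factorial n := by
        refine Summable.tsum_le_tsum (fun n => ?_) (norm_expSeries_summable' (𝕂 := ℂ) x)
          (Real.summable_pow_div_factorial ‖x‖)
        rw [norm_smul]
        have h1 : ‖((Nat.factorial n : ℂ))⁻¹‖ = ((Nat.factorial n : ℝ))⁻¹ := by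
          rw [norm_inv]
          norm_num
        rw [h1, div_eq_inv_mul]
        exact mul_le_mul_of_nonneg_left (hxpow n) (by positivity)
    _ = Real.exp ‖x‖ := by
        rw [Real.exp_eq_exp_ℝ, exp_eq_tsum_div]

lemma norm_le_of_form {T : H →L[ℂ] H} (hT : IsSelfAdjoint T) {r : ℝ} (hr0 : 0 ≤ r)
    (h0 : ∀ x : H, 0 ≤ (inner ℂ x (T x) : ℂ).re)
    (hr : ∀ x : H, (inner ℂ x (T x) : ℂ).re ≤ r * ‖x‖ ^ 2) : ‖T‖ ≤ r := by
  refine ContinuousLinearMap.opNorm_le_bound T hr0 (fun x => ?_)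
  rcases eq_or_ne (T x) 0 with h | h
  · simp [h]
    positivity
  have hx : x ≠ 0 := by rintro rfl; simp at h
  have hxn : 0 < ‖x‖ := norm_pos_iff.mpr hx
  have key : ∀ y : H, 4 * (inner ℂ y (T x) : ℂ).re ≤ r * (‖x‖ + ‖y‖) ^ 2 := by
    intro y
    have hxy : (inner ℂ x (T y) : ℂ).re = (inner ℂ y (T x) : ℂ).re := by
      rw [sa_move' hT x y, ← inner_conj_symm]
      exact Complex.conj_re _
    have e1 : (inner ℂ (x + y) (T (x + y)) : ℂ).re
        = (inner ℂ x (T x) : ℂ).re + (inner ℂ y (T y) : ℂ).re + 2 * (inner ℂ y (T x) : ℂ).re := by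
      simp only [map_add, inner_add_left, inner_add_right, Complex.add_re]
      rw [hxy]; ring
    have e2 : (inner ℂ (x - y) (T (x - y)) : ℂ).re
        = (inner ℂ x (T x) : ℂ).re + (inner ℂ y (T y) : ℂ).re - 2 * (inner ℂ y (T x) : ℂ).re := by
      simp only [map_sub, inner_sub_left, inner_sub_right, Complex.sub_re]
      rw [hxy]; ring
    have h1 := hr (x + y)
    have h2 := h0 (x - y)
    have h3 : ‖x + y‖ ^ 2 ≤ (‖x‖ + ‖y‖) ^ 2 := by
      have := norm_add_le x y
      nlinarith [norm_nonneg (x + y), norm_nonneg x, norm_nonneg y]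
    nlinarith [mul_le_mul_of_nonneg_left h3 hr0]
  have hTx : 0 < ‖T x‖ := norm_pos_iff.mpr h
  have hkey := key ((‖x‖ / ‖T x‖) • T x)
  have hyval : (inner ℂ ((‖x‖ / ‖T x‖) • T x) (T x) : ℂ).re = ‖x‖ * ‖T x‖ := by
    rw [← Complex.coe_smul, inner_smul_left]
    have hre : (inner ℂ (T x) (T x) : ℂ).re = ‖T x‖ ^ 2 := by
      simpa using inner_self_eq_norm_sq (𝕜 := ℂ) (x := T x)
    have him : (inner ℂ (T x) (T x) : ℂ).im = 0 := inner_self_im (𝕜 := ℂ) (x := T x)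
    simp only [Complex.mul_re, Complex.conj_re, Complex.conj_im, Complex.ofReal_re,
      Complex.ofReal_im, him, hre]
    field_simp
    ring
  have hynorm : ‖(‖x‖ / ‖T x‖) • T x‖ = ‖x‖ := by
    rw [norm_smul, Real.norm_eq_abs, abs_of_nonneg (by positivity)]
    field_simp
  rw [hyval, hynorm] at hkey
  nlinarith

end Aux

set_option maxHeartbeats 2000000 in
/-- for `H_B ≥ 0` self-adjoint with heat semigroup
`S(t) = e^{-t H_B}`, a symmetric perturbation `V` with
`‖e^{-H_B t/2} V e^{-H_B t/2}‖ ≤ b t^{ε-1}`, and `H = H_B + V ≥ cI`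
(`c > 0`), the operator `F(t) = e^{-H_B t/2}(I - tV)e^{-H_B t/2}` satisfies:
there is `t₀ > 0` such that `0 < ⟨φ, F(t)φ⟩ < 1` for every unit vector `φ`
and `0 < t < t₀`; consequently `‖F(t)‖ < 1` for such `t`. -/
theorem F_contraction
    {H : Type*} [NormedAddCommGroup H] [InnerProductSpace ℂ H] [CompleteSpace H]
    (HB V : H →L[ℂ] H)
    (hHBsa : IsSelfAdjoint HB)
    (hHBpos : ∀ φ : H, 0 ≤ (inner ℂ (HB φ) φ : ℂ).re)
    (hVsa : IsSelfAdjoint V)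
    (S : ℝ → H →L[ℂ] H)
    (hS : ∀ t : ℝ, S t = NormedSpace.exp (((-t : ℝ) : ℂ) • HB))
    (b ε c : ℝ) (hb : 0 < b) (hε : 0 < ε) (hε1 : ε < 1) (hc : 0 < c)
    (hbound : ∀ t : ℝ, 0 < t → ‖(S (t / 2) ∘L V) ∘L S (t / 2)‖ ≤ b * t ^ (-1 + ε))
    (hcontr : ∀ t : ℝ, 0 < t → ‖S t‖ ≤ 1)
    (hHc : ∀ φ : H, c * ‖φ‖ ^ 2 ≤ (inner ℂ ((HB + V) φ) φ : ℂ).re)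
    (F : ℝ → H →L[ℂ] H)
    (hF : ∀ t : ℝ, F t = (S (t / 2) ∘L ((1 : H →L[ℂ] H) - t • V)) ∘L S (t / 2)) :
    ∃ t₀ : ℝ, 0 < t₀ ∧ ∀ t : ℝ, 0 < t → t < t₀ →
      (∀ φ : H, ‖φ‖ = 1 →
        0 < (inner ℂ φ (F t φ) : ℂ).re ∧ (inner ℂ φ (F t φ) : ℂ).re < 1) ∧
      ‖F t‖ < 1 := by
  classical
  set M := ‖HB‖ with hM
  have hM0 : 0 ≤ M := norm_nonneg _
  refine ⟨min (min 1 (1 / (4 * (M + 1)))) ((1 / (4 * b)) ^ (1 / ε)), ?_, ?_⟩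
  · have h1 : (0:ℝ) < 1 / (4 * (M + 1)) := by positivity
    have h2 : (0:ℝ) < (1 / (4 * b)) ^ (1 / ε) := Real.rpow_pos_of_pos (by positivity) _
    exact lt_min (lt_min one_pos h1) h2
  intro t ht0 htt
  have ht1 : t < 1 := lt_of_lt_of_le htt ((min_le_left _ _).trans (min_le_left _ _))
  have htM : t * M < 1 / 4 := by
    have h := lt_of_lt_of_le htt ((min_le_left _ _).trans (min_le_right _ _))
    have : t * (M + 1) < (1 / (4 * (M + 1))) * (M + 1) :=
      mul_lt_mul_of_pos_right h (by positivity)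
    have h2 : (1 / (4 * (M + 1))) * (M + 1) = 1 / 4 := by field_simp
    nlinarith
  have htb : b * t ^ ε < 1 / 4 := by
    have h := lt_of_lt_of_le htt (min_le_right _ _)
    have h2 : t ^ ε < ((1 / (4 * b)) ^ (1 / ε)) ^ ε :=
      Real.rpow_lt_rpow ht0.le h hε
    have h3 : ((1 / (4 * b)) ^ (1 / ε)) ^ ε = 1 / (4 * b) := by
      rw [← Real.rpow_mul (by positivity), one_div ε, inv_mul_cancel₀ hε.ne', Real.rpow_one]
    rw [h3] at h2
    have h4 := mul_lt_mul_of_pos_left h2 hb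
    have h5 : b * (1 / (4 * b)) = 1 / 4 := by field_simp
    linarith
  -- operator setup
  have hS2 : S (t / 2) = exp (((-(t / 2) : ℝ) : ℂ) • HB) := hS (t / 2)
  have hSt : S t = exp (((-t : ℝ) : ℂ) • HB) := hS t
  have hSsa : IsSelfAdjoint (S (t / 2)) := by rw [hS2]; exact expR_sa hHBsa (-(t / 2))
  have hmul : S (t / 2) * S (t / 2) = S t := by
    rw [hS2, hSt, expR_add HB (-(t / 2)) (-(t / 2)),
      show -(t / 2) + -(t / 2) = -t from by ring]
  have hcommHB : exp (((-(t / 2) : ℝ) : ℂ) • HB) * HB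
      = HB * exp (((-(t / 2) : ℝ) : ℂ) • HB) :=
    ((expR_comm HB (-(t / 2))).symm).eq
  have hψψ : ∀ φ : H, (inner ℂ (S (t / 2) φ) (S (t / 2) φ) : ℂ).re = ‖S (t / 2) φ‖ ^ 2 :=
    fun φ => by simpa using inner_self_eq_norm_sq (𝕜 := ℂ) (x := S (t / 2) φ)
  have hFapp : ∀ φ : H, F t φ = S (t / 2) ((S (t / 2) φ) - t • V (S (t / 2) φ)) := by
    intro φ
    rw [hF]
    simp [ContinuousLinearMap.comp_apply, ContinuousLinearMap.sub_apply]
  have hKA : ∀ φ : H, (inner ℂ φ (F t φ) : ℂ).re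
      = ‖S (t / 2) φ‖ ^ 2 - t * (inner ℂ (S (t / 2) φ) (V (S (t / 2) φ)) : ℂ).re := by
    intro φ
    rw [hFapp φ, sa_move' hSsa, inner_sub_right, ← Complex.coe_smul, inner_smul_right]
    rw [Complex.sub_re, Complex.re_ofReal_mul, hψψ φ]
  have hKB : ∀ φ : H, (inner ℂ φ (S t φ) : ℂ).re = ‖S (t / 2) φ‖ ^ 2 := by
    intro φ
    have h1 : S t φ = S (t / 2) (S (t / 2) φ) := by
      rw [← hmul]; rfl
    rw [h1, sa_move' hSsa, hψψ φ]
  have hKE : ∀ φ : H, (inner ℂ (S (t / 2) φ) (HB (S (t / 2) φ)) : ℂ)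
      = inner ℂ φ (HB (S t φ)) := by
    intro φ
    have hop : S (t / 2) * HB * S (t / 2) = HB * S t := by
      rw [hS2, hSt]
      rw [hcommHB, mul_assoc, expR_add HB (-(t / 2)) (-(t / 2)),
        show -(t / 2) + -(t / 2) = -t from by ring]
    have happ : S (t / 2) (HB (S (t / 2) φ)) = HB (S t φ) := by
      have := congrArg (fun (T : H →L[ℂ] H) => T φ) hop
      simpa [ContinuousLinearMap.mul_apply] using this
    rw [← happ, sa_move' hSsa]
  have hVbound : ∀ φ : H, |(inner ℂ (S (t / 2) φ) (V (S (t / 2) φ)) : ℂ).re|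
      ≤ b * t ^ (-1 + ε) * ‖φ‖ ^ 2 := by
    intro φ
    have heq : (inner ℂ (S (t / 2) φ) (V (S (t / 2) φ)) : ℂ)
        = inner ℂ φ (((S (t / 2) ∘L V) ∘L S (t / 2)) φ) := by
      rw [ContinuousLinearMap.comp_apply, ContinuousLinearMap.comp_apply, sa_move' hSsa]
    rw [heq]
    calc |(inner ℂ φ (((S (t / 2) ∘L V) ∘L S (t / 2)) φ) : ℂ).re|
        ≤ ‖(inner ℂ φ (((S (t / 2) ∘L V) ∘L S (t / 2)) φ) : ℂ)‖ := Complex.abs_re_le_norm _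
      _ ≤ ‖φ‖ * ‖((S (t / 2) ∘L V) ∘L S (t / 2)) φ‖ := norm_inner_le_norm _ _
      _ ≤ ‖φ‖ * (‖(S (t / 2) ∘L V) ∘L S (t / 2)‖ * ‖φ‖) := by
          gcongr
          exact ContinuousLinearMap.le_opNorm _ _
      _ ≤ ‖φ‖ * (b * t ^ (-1 + ε) * ‖φ‖) := by
          gcongr
          exact hbound t ht0
      _ = b * t ^ (-1 + ε) * ‖φ‖ ^ 2 := by ring
  have htpow : t * t ^ (-1 + ε) = t ^ ε := by
    have e2 : t ^ ((1 : ℝ) + (-1 + ε)) = t ^ (1 : ℝ) * t ^ (-1 + ε) := Real.rpow_add ht0 _ _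
    have e3 : (1 : ℝ) + (-1 + ε) = ε := by ring
    rw [e3] at e2
    rw [e2, Real.rpow_one]
  -- lower bound
  have hlower : ∀ φ : H, (1 / 2) * ‖φ‖ ^ 2 ≤ (inner ℂ φ (F t φ) : ℂ).re := by
    intro φ
    rw [hKA φ]
    have h1 : ‖φ‖ ^ 2 ≤ Real.exp (t * M) * ‖S (t / 2) φ‖ ^ 2 := by
      have hid : exp (((t / 2 : ℝ) : ℂ) • HB) * S (t / 2) = 1 := by
        rw [hS2, expR_add HB (t / 2) (-(t / 2))]
        norm_num
      have hφeq : (exp (((t / 2 : ℝ) : ℂ) • HB)) (S (t / 2) φ) = φ := by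
        rw [← ContinuousLinearMap.mul_apply, hid, ContinuousLinearMap.one_apply]
      have hEnorm : ‖exp (((t / 2 : ℝ) : ℂ) • HB)‖ ≤ Real.exp (t / 2 * M) := by
        have := norm_exp_le_exp_norm (((t / 2 : ℝ) : ℂ) • HB)
        have hn : ‖((t / 2 : ℝ) : ℂ) • HB‖ = t / 2 * M := by
          rw [norm_smul, Complex.norm_real, Real.norm_eq_abs, abs_of_nonneg (by linarith)]
        rw [hn] at this
        exact this
      have hnorm : ‖φ‖ ≤ Real.exp (t / 2 * M) * ‖S (t / 2) φ‖ := by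
        calc ‖φ‖ = ‖(exp (((t / 2 : ℝ) : ℂ) • HB)) (S (t / 2) φ)‖ := by rw [hφeq]
          _ ≤ ‖exp (((t / 2 : ℝ) : ℂ) • HB)‖ * ‖S (t / 2) φ‖ :=
              ContinuousLinearMap.le_opNorm _ _
          _ ≤ Real.exp (t / 2 * M) * ‖S (t / 2) φ‖ := by
              gcongr
      calc ‖φ‖ ^ 2 ≤ (Real.exp (t / 2 * M) * ‖S (t / 2) φ‖) ^ 2 :=
            pow_le_pow_left₀ (norm_nonneg φ) hnorm 2
        _ = Real.exp (t * M) * ‖S (t / 2) φ‖ ^ 2 := by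
            rw [mul_pow, sq (Real.exp (t / 2 * M)), ← Real.exp_add]
            ring_nf
    have h2 : (1 - t * M) * ‖φ‖ ^ 2 ≤ ‖S (t / 2) φ‖ ^ 2 := by
      have he : 1 - t * M ≤ Real.exp (-(t * M)) := by
        have := Real.add_one_le_exp (-(t * M))
        linarith
      have hexppos : (0 : ℝ) < Real.exp (t * M) := Real.exp_pos _
      have hprod : Real.exp (-(t * M)) * Real.exp (t * M) = 1 := by
        rw [← Real.exp_add]; norm_num
      have h3 : Real.exp (-(t * M)) * ‖φ‖ ^ 2 ≤ ‖S (t / 2) φ‖ ^ 2 := by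
        nlinarith [mul_le_mul_of_nonneg_left h1 (Real.exp_pos (-(t * M))).le]
      nlinarith [sq_nonneg ‖φ‖]
    have h4 : t * (inner ℂ (S (t / 2) φ) (V (S (t / 2) φ)) : ℂ).re ≤ b * t ^ ε * ‖φ‖ ^ 2 := by
      have habs := (abs_le.mp (hVbound φ)).2
      have := mul_le_mul_of_nonneg_left habs ht0.le
      calc t * (inner ℂ (S (t / 2) φ) (V (S (t / 2) φ)) : ℂ).re
          ≤ t * (b * t ^ (-1 + ε) * ‖φ‖ ^ 2) := this
        _ = (t * t ^ (-1 + ε)) * b * ‖φ‖ ^ 2 := by ring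
        _ = b * t ^ ε * ‖φ‖ ^ 2 := by rw [htpow]; ring
    have hcoef : (0 : ℝ) ≤ 1 - t * M - b * t ^ ε - 1 / 2 := by linarith
    nlinarith [mul_nonneg hcoef (sq_nonneg ‖φ‖)]
  -- upper bound
  have hupper : ∀ φ : H, (inner ℂ φ (F t φ) : ℂ).re ≤ Real.exp (-(c * t)) * ‖φ‖ ^ 2 := by
    intro φ
    have hH := hHc (S (t / 2) φ)
    have hsplit : (inner ℂ ((HB + V) (S (t / 2) φ)) (S (t / 2) φ) : ℂ).re
        = (inner ℂ (S (t / 2) φ) (HB (S (t / 2) φ)) : ℂ).re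
          + (inner ℂ (S (t / 2) φ) (V (S (t / 2) φ)) : ℂ).re := by
      rw [ContinuousLinearMap.add_apply, inner_add_left, Complex.add_re,
        re_inner_symm (HB (S (t / 2) φ)) (S (t / 2) φ),
        re_inner_symm (V (S (t / 2) φ)) (S (t / 2) φ)]
    rw [hsplit] at hH
    have hstep1 : (inner ℂ φ (F t φ) : ℂ).re
        ≤ ‖S (t / 2) φ‖ ^ 2 + t * (inner ℂ (S (t / 2) φ) (HB (S (t / 2) φ)) : ℂ).re
          - c * t * ‖S (t / 2) φ‖ ^ 2 := by
      rw [hKA φ]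
      have hv : c * ‖S (t / 2) φ‖ ^ 2 - (inner ℂ (S (t / 2) φ) (HB (S (t / 2) φ)) : ℂ).re
          ≤ (inner ℂ (S (t / 2) φ) (V (S (t / 2) φ)) : ℂ).re := by linarith
      nlinarith [mul_le_mul_of_nonneg_left hv ht0.le]
    -- the exponential form inequality
    set k : ℝ := Real.exp (c * t) with hkdef
    have hkpos : (0 : ℝ) < k := Real.exp_pos _
    set C : H →L[ℂ] H := (t : ℂ) • HB - ((c * t : ℝ) : ℂ) • 1 with hCdef
    have hCsa : IsSelfAdjoint C := by
      rw [IsSelfAdjoint, star_sub, star_smul, star_smul, hHBsa.star_eq, star_one]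
      simp only [Complex.star_def, Complex.conj_ofReal]
      exact hCdef.symm
    have hexpC : exp (-C) = ((k : ℝ) : ℂ) • S t := by
      have hsplit2 : -C = ((c * t : ℝ) : ℂ) • (1 : H →L[ℂ] H) + ((-t : ℝ) : ℂ) • HB := by
        rw [hCdef]
        push_cast
        module
      letI : NormedAlgebra ℚ (H →L[ℂ] H) := NormedAlgebra.restrictScalars ℚ ℂ _
      rw [hsplit2, exp_add_of_commute (((Commute.one_left HB).smul_left _).smul_right _)]
      have h1 : exp (((c * t : ℝ) : ℂ) • (1 : H →L[ℂ] H)) = ((k : ℝ) : ℂ) • 1 := by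
        rw [← Algebra.algebraMap_eq_smul_one, ← algebraMap_exp_comm]
        rw [← Complex.exp_eq_exp_ℂ, ← Complex.ofReal_exp, Algebra.algebraMap_eq_smul_one]
      rw [h1, smul_mul_assoc, one_mul, ← hSt]
    have hfU := formU hCsa φ
    rw [hexpC] at hfU
    have hterm1 : (inner ℂ φ ((((k : ℝ) : ℂ) • S t) φ) : ℂ).re
        = k * (inner ℂ φ (S t φ) : ℂ).re := by
      rw [ContinuousLinearMap.smul_apply, inner_smul_right, Complex.re_ofReal_mul]
    have hterm2 : (inner ℂ φ ((C * (((k : ℝ) : ℂ) • S t)) φ) : ℂ).re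
        = k * (t * (inner ℂ φ (HB (S t φ)) : ℂ).re - (c * t) * (inner ℂ φ (S t φ) : ℂ).re) := by
      rw [mul_smul_comm]
      rw [ContinuousLinearMap.smul_apply, inner_smul_right, Complex.re_ofReal_mul]
      congr 1
      rw [ContinuousLinearMap.mul_apply]
      rw [hCdef]
      rw [ContinuousLinearMap.sub_apply, ContinuousLinearMap.smul_apply,
        ContinuousLinearMap.smul_apply, inner_sub_right, inner_smul_right, inner_smul_right]
      rw [Complex.sub_re, Complex.re_ofReal_mul, Complex.re_ofReal_mul]
      rw [ContinuousLinearMap.one_apply]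
    rw [hterm1, hterm2] at hfU
    have hA := hKB φ
    have hB := hKE φ
    have hkinv : Real.exp (-(c * t)) * k = 1 := by
      rw [hkdef, ← Real.exp_add]
      norm_num
    have hres : (inner ℂ φ (S t φ) : ℂ).re + t * (inner ℂ φ (HB (S t φ)) : ℂ).re
        - c * t * (inner ℂ φ (S t φ) : ℂ).re ≤ Real.exp (-(c * t)) * ‖φ‖ ^ 2 := by
      have hmul2 := mul_le_mul_of_nonneg_left hfU (Real.exp_pos (-(c * t))).le
      nlinarith [hmul2]
    calc (inner ℂ φ (F t φ) : ℂ).re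
        ≤ ‖S (t / 2) φ‖ ^ 2 + t * (inner ℂ (S (t / 2) φ) (HB (S (t / 2) φ)) : ℂ).re
          - c * t * ‖S (t / 2) φ‖ ^ 2 := hstep1
      _ = (inner ℂ φ (S t φ) : ℂ).re + t * (inner ℂ φ (HB (S t φ)) : ℂ).re
          - c * t * (inner ℂ φ (S t φ) : ℂ).re := by rw [hA, hB]
      _ ≤ Real.exp (-(c * t)) * ‖φ‖ ^ 2 := hres
  -- conclusion
  have hexplt1 : Real.exp (-(c * t)) < 1 := by
    rw [Real.exp_lt_one_iff]
    nlinarith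
  refine ⟨?_, ?_⟩
  · intro φ hφ
    constructor
    · have := hlower φ
      rw [hφ] at this
      norm_num at this
      linarith
    · have := hupper φ
      rw [hφ] at this
      norm_num at this
      linarith
  · have hFsa : IsSelfAdjoint (F t) := by
      have hXsa : IsSelfAdjoint ((1 : H →L[ℂ] H) - t • V) := by
        rw [IsSelfAdjoint, star_sub, star_one, star_smul, star_trivial, hVsa.star_eq]
      rw [hF]
      show IsSelfAdjoint (S (t / 2) * (1 - t • V) * S (t / 2))
      rw [IsSelfAdjoint, star_mul, star_mul, hSsa.star_eq, hXsa.star_eq, mul_assoc]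
    have h0 : ∀ x : H, 0 ≤ (inner ℂ x (F t x) : ℂ).re := fun x =>
      le_trans (by positivity) (hlower x)
    have hnorm := norm_le_of_form hFsa (Real.exp_pos (-(c * t))).le h0 hupper
    exact lt_of_le_of_lt hnorm hexplt1
end
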